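/- Let (L, Δ) be an objective partial group in which Δ is a collection of subgroups of some S ∈ Δ. For g ∈ L define S_g = {x ∈ D(g) ∩ S : x^g ∈ S}. Then S_g ∈ Δ (in particular S_g is a subgroup of S), conjugation c_g : S_g → (S_g)^g is an isomorphism of groups with S_{g⁻¹} = (S_g)^g, and for every subgroup P ≤ S_g the conjugate P^g is defined and is a subgroup of S. -/

import Mathlib

universe u

structure PartialGroupOn (L : Type u) : Type u where
  nonempty : Nonempty L
  D : Set (List L)
  Pi : List L → L
  inv : L → L
  mem_single : ∀ x : L, [x] ∈ D
  mem_append_left : ∀ u v : List L, u ++ v ∈ D → u ∈ D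
  mem_append_right : ∀ u v : List L, u ++ v ∈ D → v ∈ D
  Pi_single : ∀ x : L, Pi [x] = x
  mem_assoc : ∀ u v w : List L, u ++ v ++ w ∈ D → u ++ [Pi v] ++ w ∈ D
  Pi_assoc : ∀ u v w : List L, u ++ v ++ w ∈ D →
    Pi (u ++ v ++ w) = Pi (u ++ [Pi v] ++ w)
  inv_inv : ∀ x : L, inv (inv x) = x
  mem_inv : ∀ w ∈ D, (w.reverse.map inv) ++ w ∈ D
  Pi_inv : ∀ w ∈ D, Pi ((w.reverse.map inv) ++ w) = Pi []

namespace PartialGroupOn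

variable {L : Type u} (M : PartialGroupOn L)

/-- The inverse of a word: reverse the word and invert each entry. -/
def wordInv (w : List L) : List L := w.reverse.map M.inv

/-- The identity element `1 = Π(∅)`. -/
def one : L := M.Pi []

/-- Conjugation `x ↦ x^g = Π(g⁻¹, x, g)`. -/
def conj (x g : L) : L := M.Pi [M.inv g, x, g]

/-- `D(g)` is the set of `x` for which `x^g` is defined. -/
def Dg (g : L) : Set L := {x | [M.inv g, x, g] ∈ M.D}

/-- A partial subgroup: a nonempty subset closed under inversion and under the
product applied to words in `D` with entries in the subset. -/
def IsPartialSubgroup (H : Set L) : Prop :=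
  H.Nonempty ∧ (∀ x ∈ H, M.inv x ∈ H) ∧
    ∀ w : List L, (∀ x ∈ w, x ∈ H) → w ∈ M.D → M.Pi w ∈ H

/-- A partial normal subgroup of `L`. -/
def IsPartialNormal (N : Set L) : Prop :=
  M.IsPartialSubgroup N ∧
    ∀ x ∈ N, ∀ g : L, [M.inv g, x, g] ∈ M.D → M.conj x g ∈ N

/-- A subgroup of `L`: a partial subgroup `H` with `W(H) ⊆ D`. -/
def IsSubgroup (H : Set L) : Prop :=
  M.IsPartialSubgroup H ∧ ∀ w : List L, (∀ x ∈ w, x ∈ H) → w ∈ M.D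

/-- `X ⊆ D(g)`, i.e. `X^g` is defined. -/
def setConjDef (X : Set L) (g : L) : Prop := ∀ x ∈ X, [M.inv g, x, g] ∈ M.D

/-- The conjugate set `X^g`. -/
def setConj (X : Set L) (g : L) : Set L := {y | ∃ x ∈ X, y = M.conj x g}

/-- `viaChain Δ w X` says that `w = (g₁,…,gₙ)` is in `D` via the chain
`X = X₀, X₁ = X₀^{g₁}, …` of members of `Δ`. -/
def viaChain (Δ : Set (Set L)) : List L → Set L → Prop
  | [], X => X ∈ Δ
  | g :: w, X => X ∈ Δ ∧ M.setConjDef X g ∧ viaChain Δ w (M.setConj X g)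

/-- `(L, Δ)` is an objective partial group: every member of `Δ` is a subgroup,
(O1) `D = D_Δ`, and (O2) the overgroup-closure condition. -/
def Objective (Δ : Set (Set L)) : Prop :=
  (∀ X ∈ Δ, M.IsSubgroup X) ∧
  (M.D = {w | ∃ X : Set L, M.viaChain Δ w X}) ∧
  (∀ X ∈ Δ, ∀ Y ∈ Δ, ∀ g : L, M.setConjDef X g → M.IsSubgroup (M.setConj X g) →
    M.setConj X g ⊆ Y →
    ∀ Z : Set L, M.IsSubgroup Z → M.setConj X g ⊆ Z → Z ⊆ Y → Z ∈ Δ)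

/-- The normalizer `N_L(X) = {g : X^g = X}`. -/
def normalizer (X : Set L) : Set L := {g | M.setConjDef X g ∧ M.setConj X g = X}

/-- `S_g = {x ∈ D(g) ∩ S : x^g ∈ S}`. -/
def Sg (S : Set L) (g : L) : Set L :=
  {x | x ∈ S ∧ [M.inv g, x, g] ∈ M.D ∧ M.conj x g ∈ S}

/-- `S_w`: the set of `x ∈ S` successively conjugated into `S` by the entries
of the word `w`. -/
def Sw (S : Set L) : List L → Set L
  | [] => S
  | g :: w => {x | x ∈ S ∧ [M.inv g, x, g] ∈ M.D ∧ M.conj x g ∈ Sw S w}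

/-- A `p`-subgroup: a subgroup whose cardinality is a power of `p`. -/
def IsPSubgroup (p : ℕ) (H : Set L) : Prop :=
  M.IsSubgroup H ∧ ∃ n : ℕ, Nat.card H = p ^ n

/-- `(L, Δ, S)` is a locality. -/
def IsLocality (p : ℕ) (Δ : Set (Set L)) (S : Set L) : Prop :=
  p.Prime ∧ Finite L ∧ S ∈ Δ ∧ (∀ X ∈ Δ, X ⊆ S) ∧ M.Objective Δ ∧
    M.IsPSubgroup p S ∧
    ∀ H : Set L, M.IsPSubgroup p H → S ⊆ H → H = S

/-- The product set `XY` of two subsets of `L`. -/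
def setProd (X Y : Set L) : Set L :=
  {z | ∃ a ∈ X, ∃ b ∈ Y, [a, b] ∈ M.D ∧ z = M.Pi [a, b]}

/-- A homomorphism of partial groups. -/
def IsHom {L' : Type u} (M' : PartialGroupOn L') (β : L → L') : Prop :=
  (∀ w ∈ M.D, w.map β ∈ M'.D) ∧ ∀ w ∈ M.D, β (M.Pi w) = M'.Pi (w.map β)

end PartialGroupOn

open PartialGroupOn

variable {L : Type u}


namespace PartialGroupOn

variable {L : Type u} (M : PartialGroupOn L)

lemma nil_mem : ([] : List L) ∈ M.D := by
  obtain ⟨x⟩ := M.nonempty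
  exact M.mem_append_left [] [x] (M.mem_single x)

lemma inv_pair_mem (x : L) : [M.inv x, x] ∈ M.D := M.mem_inv [x] (M.mem_single x)

lemma pi_inv_pair (x : L) : M.Pi [M.inv x, x] = M.one := M.Pi_inv [x] (M.mem_single x)

lemma inv_pair_mem' (x : L) : [x, M.inv x] ∈ M.D := by
  have h := M.inv_pair_mem (M.inv x)
  rwa [M.inv_inv] at h

lemma pi_inv_pair' (x : L) : M.Pi [x, M.inv x] = M.one := by
  have h := M.pi_inv_pair (M.inv x)
  rwa [M.inv_inv] at h

lemma one_mul_mem (x : L) : [M.one, x] ∈ M.D :=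
  M.mem_assoc [] [] [x] (M.mem_single x)

lemma pi_one_mul (x : L) : M.Pi [M.one, x] = x := by
  have h := M.Pi_assoc [] [] [x] (M.mem_single x)
  simpa [M.Pi_single, PartialGroupOn.one] using h.symm

lemma mul_one_mem (x : L) : [x, M.one] ∈ M.D :=
  M.mem_assoc [x] [] [] (M.mem_single x)

lemma pi_mul_one (x : L) : M.Pi [x, M.one] = x := by
  have h := M.Pi_assoc [x] [] [] (M.mem_single x)
  simpa [M.Pi_single, PartialGroupOn.one] using h.symm

lemma inv_unique {a b : L} (h : [a, b] ∈ M.D) (hv : M.Pi [a, b] = M.one) :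
    b = M.inv a := by
  have h1 : [M.inv b, M.inv a, a, b] ∈ M.D := M.mem_inv _ h
  have h2 : [M.inv a, a, b] ∈ M.D := M.mem_append_right [M.inv b] _ h1
  have e1 := M.Pi_assoc [] [M.inv a, a] [b] h2
  have e2 := M.Pi_assoc [M.inv a] [a, b] [] h2
  simp only [List.cons_append, List.nil_append, List.append_nil] at e1 e2
  rw [M.pi_inv_pair a] at e1
  rw [hv] at e2
  rw [e1] at e2
  rw [M.pi_one_mul b, M.pi_mul_one (M.inv a)] at e2
  exact e2

lemma wordInv_mem {w : List L} (h : w ∈ M.D) : M.wordInv w ∈ M.D :=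
  M.mem_append_left _ w (M.mem_inv w h)

lemma pi_wordInv {w : List L} (h : w ∈ M.D) :
    M.Pi (M.wordInv w) = M.inv (M.Pi w) := by
  have h1 : M.wordInv w ++ w ∈ M.D := M.mem_inv w h
  have hp : M.Pi (M.wordInv w ++ w) = M.one := M.Pi_inv w h
  have e1 := M.Pi_assoc [] (M.wordInv w) w h1
  simp only [List.nil_append] at e1
  have m1 : [M.Pi (M.wordInv w)] ++ w ∈ M.D := M.mem_assoc [] (M.wordInv w) w h1
  have m1' : [M.Pi (M.wordInv w)] ++ w ++ [] ∈ M.D := by simpa using m1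
  have e2 := M.Pi_assoc [M.Pi (M.wordInv w)] w [] m1'
  simp only [List.cons_append, List.nil_append, List.append_nil] at e2
  have m2 : [M.Pi (M.wordInv w), M.Pi w] ∈ M.D := by
    have := M.mem_assoc [M.Pi (M.wordInv w)] w [] m1'
    simpa using this
  have e3 : M.Pi [M.Pi (M.wordInv w), M.Pi w] = M.one := by
    have e4 : M.Pi ([M.Pi (M.wordInv w)] ++ w) = M.one := by rw [← e1]; exact hp
    simp only [List.singleton_append] at e4
    rw [← e2]
    simpa using e4
  have h6 : M.Pi w = M.inv (M.Pi (M.wordInv w)) := M.inv_unique m2 e3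
  rw [h6, M.inv_inv]

lemma inv_one : M.inv M.one = M.one := by
  have h : [M.one, M.one] ∈ M.D := M.one_mul_mem M.one
  have hv : M.Pi [M.one, M.one] = M.one := M.pi_one_mul M.one
  exact (M.inv_unique h hv).symm

lemma conj_one_mem (h : L) : [M.inv h, M.one, h] ∈ M.D :=
  M.mem_assoc [M.inv h] [] [h] (M.inv_pair_mem h)

lemma conj_one (h : L) : M.conj M.one h = M.one := by
  have e := M.Pi_assoc [M.inv h] [] [h] (M.inv_pair_mem h)
  have : M.conj M.one h = M.Pi [M.inv h, h] := by
    show M.Pi [M.inv h, M.one, h] = _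
    exact e.symm
  rw [this, M.pi_inv_pair h]

end PartialGroupOn

namespace PartialGroupOn

variable {L : Type u} (M : PartialGroupOn L)

/-- From `(h⁻¹, x, h) ∈ D` derive the five-letter word `(h, h⁻¹, x, h, h⁻¹) ∈ D`. -/
lemma c5_mem {h' x : L} (h : [M.inv h', x, h'] ∈ M.D) :
    [h', M.inv h', x, h', M.inv h'] ∈ M.D := by
  have h1 : [M.inv h', M.inv x, M.inv (M.inv h'), M.inv h', x, h'] ∈ M.D := M.mem_inv _ h
  rw [M.inv_inv] at h1
  have h2 : [M.inv h', M.inv x, M.inv (M.inv h'), M.inv h', M.inv (M.inv x),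
      M.inv (M.inv h'), M.inv h', M.inv x, h', M.inv h', x, h'] ∈ M.D := M.mem_inv _ h1
  rw [M.inv_inv, M.inv_inv] at h2
  have h3 : [h', M.inv h', x, h', M.inv h', M.inv x, h', M.inv h', x, h'] ∈ M.D :=
    M.mem_append_right [M.inv h', M.inv x] _ h2
  exact M.mem_append_left [h', M.inv h', x, h', M.inv h']
    [M.inv x, h', M.inv h', x, h'] h3

lemma rev_conj_mem {h' x : L} (h : [M.inv h', x, h'] ∈ M.D) :
    [h', M.conj x h', M.inv h'] ∈ M.D := by
  have h4 := M.c5_mem h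
  have := M.mem_assoc [h'] [M.inv h', x, h'] [M.inv h'] h4
  simpa [PartialGroupOn.conj] using this

lemma pi_c5 {h' x : L} (h : [M.inv h', x, h'] ∈ M.D) :
    M.Pi [h', M.inv h', x, h', M.inv h'] = x := by
  have h4 := M.c5_mem h
  have e1 := M.Pi_assoc [] [h', M.inv h'] [x, h', M.inv h'] h4
  have m1 := M.mem_assoc [] [h', M.inv h'] [x, h', M.inv h'] h4
  simp only [List.cons_append, List.nil_append, List.append_nil] at e1 m1
  rw [M.pi_inv_pair' h'] at e1 m1
  have e2 := M.Pi_assoc [] [M.one, x] [h', M.inv h'] m1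
  have m2 := M.mem_assoc [] [M.one, x] [h', M.inv h'] m1
  simp only [List.cons_append, List.nil_append, List.append_nil] at e2 m2
  rw [M.pi_one_mul x] at e2 m2
  have e3 := M.Pi_assoc [x] [h', M.inv h'] [] m2
  simp only [List.cons_append, List.nil_append, List.append_nil] at e3
  rw [M.pi_inv_pair' h'] at e3
  rw [e1, e2, e3, M.pi_mul_one x]

lemma pi_rev_conj {h' x : L} (h : [M.inv h', x, h'] ∈ M.D) :
    M.Pi [h', M.conj x h', M.inv h'] = x := by
  have h4 := M.c5_mem h
  have e := M.Pi_assoc [h'] [M.inv h', x, h'] [M.inv h'] h4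
  simp only [List.cons_append, List.nil_append, List.append_nil] at e
  have : M.Pi [h', M.conj x h', M.inv h'] = M.Pi [h', M.inv h', x, h', M.inv h'] := by
    show M.Pi [h', M.Pi [M.inv h', x, h'], M.inv h'] = _
    exact e.symm
  rw [this, M.pi_c5 h]

/-- `x^{h} ` conjugated back by `h⁻¹` gives `x`. -/
lemma conj_conj_inv {h' x : L} (h : [M.inv h', x, h'] ∈ M.D) :
    M.conj (M.conj x h') (M.inv h') = x := by
  show M.Pi [M.inv (M.inv h'), M.conj x h', M.inv h'] = x
  rw [M.inv_inv]
  exact M.pi_rev_conj h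

/-- the form of `rev_conj_mem` needed for `setConjDef _ (inv h')`. -/
lemma rev_conj_mem' {h' x : L} (h : [M.inv h', x, h'] ∈ M.D) :
    [M.inv (M.inv h'), M.conj x h', M.inv h'] ∈ M.D := by
  rw [M.inv_inv]
  exact M.rev_conj_mem h

lemma comm_pair_mem {h' x : L} (h : [M.inv h', x, h'] ∈ M.D) : [x, h'] ∈ M.D :=
  M.mem_append_right [M.inv h'] _ h

lemma comm_pair_mem' {h' x : L} (h : [M.inv h', x, h'] ∈ M.D) :
    [h', M.conj x h'] ∈ M.D := by
  have h4 := M.c5_mem h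
  have c4 : [h', M.inv h', x, h'] ∈ M.D :=
    M.mem_append_left [h', M.inv h', x, h'] [M.inv h'] h4
  have := M.mem_assoc [h'] [M.inv h', x, h'] [] c4
  simpa [PartialGroupOn.conj] using this

lemma pi_comm {h' x : L} (h : [M.inv h', x, h'] ∈ M.D) :
    M.Pi [x, h'] = M.Pi [h', M.conj x h'] := by
  have h4 := M.c5_mem h
  have c4 : [h', M.inv h', x, h'] ∈ M.D :=
    M.mem_append_left [h', M.inv h', x, h'] [M.inv h'] h4
  have e1 := M.Pi_assoc [] [h', M.inv h'] [x, h'] c4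
  have m1 := M.mem_assoc [] [h', M.inv h'] [x, h'] c4
  simp only [List.cons_append, List.nil_append, List.append_nil] at e1 m1
  rw [M.pi_inv_pair' h'] at e1 m1
  have e2 := M.Pi_assoc [] [M.one, x] [h'] m1
  simp only [List.cons_append, List.nil_append, List.append_nil] at e2
  rw [M.pi_one_mul x] at e2
  have e3 := M.Pi_assoc [h'] [M.inv h', x, h'] [] c4
  simp only [List.cons_append, List.nil_append, List.append_nil] at e3
  calc M.Pi [x, h'] = M.Pi [h', M.inv h', x, h'] := by rw [e1, e2]
    _ = M.Pi [h', M.conj x h'] := e3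

lemma conj_inv_mem {h' x : L} (h : [M.inv h', x, h'] ∈ M.D) :
    [M.inv h', M.inv x, h'] ∈ M.D := by
  have h1 : [M.inv h', M.inv x, M.inv (M.inv h')] ∈ M.D :=
    M.mem_append_left _ _ (M.mem_inv _ h)
  rwa [M.inv_inv] at h1

lemma conj_inv {h' x : L} (h : [M.inv h', x, h'] ∈ M.D) :
    M.conj (M.inv x) h' = M.inv (M.conj x h') := by
  have e := M.pi_wordInv h
  show M.Pi [M.inv h', M.inv x, h'] = _
  have : M.wordInv [M.inv h', x, h'] = [M.inv h', M.inv x, M.inv (M.inv h')] := rfl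
  rw [this, M.inv_inv] at e
  exact e

end PartialGroupOn

namespace PartialGroupOn

variable {L : Type u} {M : PartialGroupOn L} {Δ : Set (Set L)} {S : Set L}

lemma mem_setConj {X : Set L} {h y : L} :
    y ∈ M.setConj X h ↔ ∃ x ∈ X, y = M.conj x h := Iff.rfl

lemma setConj_inv_setConj {X : Set L} {h : L} (hd : M.setConjDef X h) :
    M.setConj (M.setConj X h) (M.inv h) = X := by
  ext y
  constructor
  · rintro ⟨z, ⟨x, hx, rfl⟩, rfl⟩
    rw [M.conj_conj_inv (hd x hx)]
    exact hx
  · intro hy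
    exact ⟨M.conj y h, ⟨y, hy, rfl⟩, (M.conj_conj_inv (hd y hy)).symm⟩

lemma setConjDef_inv {X : Set L} {h : L} (hd : M.setConjDef X h) :
    M.setConjDef (M.setConj X h) (M.inv h) := by
  rintro z ⟨x, hx, rfl⟩
  exact M.rev_conj_mem' (hd x hx)

section WithObjective

variable (hobj : M.Objective Δ) (hS : S ∈ Δ)

lemma word_S (hobj : M.Objective Δ) (hS : S ∈ Δ) {w : List L}
    (h : ∀ a ∈ w, a ∈ S) : w ∈ M.D := (hobj.1 S hS).2 w h

lemma pi_S (hobj : M.Objective Δ) (hS : S ∈ Δ) {w : List L}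
    (h : ∀ a ∈ w, a ∈ S) : M.Pi w ∈ S :=
  (hobj.1 S hS).1.2.2 w h (word_S hobj hS h)

lemma inv_S (hobj : M.Objective Δ) (hS : S ∈ Δ) {a : L} (h : a ∈ S) :
    M.inv a ∈ S := (hobj.1 S hS).1.2.1 a h

lemma one_S (hobj : M.Objective Δ) (hS : S ∈ Δ) : M.one ∈ S :=
  pi_S hobj hS (w := []) (by intro a ha; exact absurd ha (List.not_mem_nil))

lemma conj_S (hobj : M.Objective Δ) (hS : S ∈ Δ) {a s : L} (ha : a ∈ S)
    (hs : s ∈ S) : M.conj a s ∈ S := by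
  apply pi_S hobj hS
  intro x hx
  rcases List.mem_cons.mp hx with rfl | hx
  · exact inv_S hobj hS hs
  rcases List.mem_cons.mp hx with rfl | hx
  · exact ha
  rcases List.mem_cons.mp hx with rfl | hx
  · exact hs
  · exact absurd hx (List.not_mem_nil)

lemma setConjDef_S (hobj : M.Objective Δ) (hS : S ∈ Δ) {X : Set L} {s : L}
    (hX : X ⊆ S) (hs : s ∈ S) : M.setConjDef X s := by
  intro x hx
  apply word_S hobj hS
  intro a ha
  rcases List.mem_cons.mp ha with rfl | ha
  · exact inv_S hobj hS hs
  rcases List.mem_cons.mp ha with rfl | ha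
  · exact hX hx
  rcases List.mem_cons.mp ha with rfl | ha
  · exact hs
  · exact absurd ha (List.not_mem_nil)

lemma setConj_sub_S (hobj : M.Objective Δ) (hS : S ∈ Δ) {X : Set L} {s : L}
    (hX : X ⊆ S) (hs : s ∈ S) : M.setConj X s ⊆ S := by
  rintro y ⟨x, hx, rfl⟩
  exact conj_S hobj hS (hX hx) hs

lemma setConjDef_one (hobj : M.Objective Δ) (hS : S ∈ Δ) (X : Set L) :
    M.setConjDef X M.one := by
  intro x _
  rw [M.inv_one]
  have h1 : [x, M.one] ∈ M.D := M.mul_one_mem x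
  exact M.mem_assoc [] [] [x, M.one] h1

lemma conj_one_right (hobj : M.Objective Δ) (hS : S ∈ Δ) (x : L) :
    M.conj x M.one = x := by
  show M.Pi [M.inv M.one, x, M.one] = x
  rw [M.inv_one]
  have h1 : [x, M.one] ∈ M.D := M.mul_one_mem x
  have h2 : [M.one, x, M.one] ∈ M.D := M.mem_assoc [] [] [x, M.one] h1
  have e1 := M.Pi_assoc [] [M.one, x] [M.one] h2
  simp only [List.cons_append, List.nil_append, List.append_nil] at e1
  rw [M.pi_one_mul x] at e1
  rw [e1, M.pi_mul_one x]

lemma setConj_one (hobj : M.Objective Δ) (hS : S ∈ Δ) (X : Set L) :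
    M.setConj X M.one = X := by
  ext y
  constructor
  · rintro ⟨x, hx, rfl⟩
    rw [conj_one_right hobj hS]
    exact hx
  · intro hy
    exact ⟨y, hy, (conj_one_right hobj hS y).symm⟩

/-- upward closure of `Δ` between a member and `S`. -/
lemma up_closed (hobj : M.Objective Δ) (hS : S ∈ Δ) {X Z : Set L} (hX : X ∈ Δ)
    (hZ : M.IsSubgroup Z) (hXZ : X ⊆ Z) (hZS : Z ⊆ S) : Z ∈ Δ := by
  have h := hobj.2.2 X hX S hS M.one (setConjDef_one hobj hS X)
  rw [setConj_one hobj hS X] at h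
  exact h (hobj.1 X hX) (fun a ha => hZS (hXZ ha)) Z hZ hXZ hZS

/-- a subgroup is stable under conjugation by its own elements. -/
lemma setConj_self {X : Set L} {ξ : L} (hX : M.IsSubgroup X) (hξ : ξ ∈ X) :
    M.setConj X ξ = X := by
  have hmem : ∀ x ∈ X, [M.inv ξ, x, ξ] ∈ M.D := by
    intro x hx
    apply hX.2
    intro a ha
    rcases List.mem_cons.mp ha with rfl | ha
    · exact hX.1.2.1 ξ hξ
    rcases List.mem_cons.mp ha with rfl | ha
    · exact hx
    rcases List.mem_cons.mp ha with rfl | ha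
    · exact hξ
    · exact absurd ha (List.not_mem_nil)
  ext y
  constructor
  · rintro ⟨x, hx, rfl⟩
    exact hX.1.2.2 [M.inv ξ, x, ξ]
      (by
        intro a ha
        rcases List.mem_cons.mp ha with rfl | ha
        · exact hX.1.2.1 ξ hξ
        rcases List.mem_cons.mp ha with rfl | ha
        · exact hx
        rcases List.mem_cons.mp ha with rfl | ha
        · exact hξ
        · exact absurd ha (List.not_mem_nil))
      (hmem x hx)
  · intro hy
    have hiξ : M.inv ξ ∈ X := hX.1.2.1 ξ hξ
    have hiiξ : M.inv (M.inv ξ) ∈ X := hX.1.2.1 _ hiξ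
    have hword : [M.inv (M.inv ξ), y, M.inv ξ] ∈ M.D := by
      apply hX.2
      intro a ha
      rcases List.mem_cons.mp ha with rfl | ha
      · exact hiiξ
      rcases List.mem_cons.mp ha with rfl | ha
      · exact hy
      rcases List.mem_cons.mp ha with rfl | ha
      · exact hiξ
      · exact absurd ha (List.not_mem_nil)
    have hy' : M.conj y (M.inv ξ) ∈ X := by
      apply hX.1.2.2 [M.inv (M.inv ξ), y, M.inv ξ]
      · intro a ha
        rcases List.mem_cons.mp ha with rfl | ha
        · exact hiiξ
        rcases List.mem_cons.mp ha with rfl | ha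
        · exact hy
        rcases List.mem_cons.mp ha with rfl | ha
        · exact hiξ
        · exact absurd ha (List.not_mem_nil)
      · exact hword
    refine ⟨M.conj y (M.inv ξ), hy', ?_⟩
    have := M.conj_conj_inv hword
    rw [M.inv_inv] at this
    exact this.symm

end WithObjective

end PartialGroupOn

namespace PartialGroupOn

variable {L : Type u} {M : PartialGroupOn L} {Δ : Set (Set L)} {S : Set L}

/-- conjugation is multiplicative inside `S`. -/
lemma conj_mul_S (hobj : M.Objective Δ) (hS : S ∈ Δ) {a b s : L}
    (ha : a ∈ S) (hb : b ∈ S) (hs : s ∈ S) :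
    M.conj (M.Pi [a, b]) s = M.Pi [M.conj a s, M.conj b s] := by
  have his : M.inv s ∈ S := inv_S hobj hS hs
  have w6 : [M.inv s, a, s, M.inv s, b, s] ∈ M.D := by
    apply word_S hobj hS
    intro x hx
    rcases List.mem_cons.mp hx with rfl | hx; · exact his
    rcases List.mem_cons.mp hx with rfl | hx; · exact ha
    rcases List.mem_cons.mp hx with rfl | hx; · exact hs
    rcases List.mem_cons.mp hx with rfl | hx; · exact his
    rcases List.mem_cons.mp hx with rfl | hx; · exact hb
    rcases List.mem_cons.mp hx with rfl | hx; · exact hs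
    · exact absurd hx (List.not_mem_nil)
  -- collapse (s, s⁻¹) in the middle
  have e1 := M.Pi_assoc [M.inv s, a] [s, M.inv s] [b, s] w6
  have m1 := M.mem_assoc [M.inv s, a] [s, M.inv s] [b, s] w6
  simp only [List.cons_append, List.nil_append, List.append_nil] at e1 m1
  rw [M.pi_inv_pair' s] at e1 m1
  have e2 := M.Pi_assoc [M.inv s] [a, M.one] [b, s] m1
  have m2 := M.mem_assoc [M.inv s] [a, M.one] [b, s] m1
  simp only [List.cons_append, List.nil_append, List.append_nil] at e2 m2
  rw [M.pi_mul_one a] at e2 m2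
  have e3 := M.Pi_assoc [M.inv s] [a, b] [s] m2
  simp only [List.cons_append, List.nil_append, List.append_nil] at e3
  -- collapse the two conjugation blocks
  have e4 := M.Pi_assoc [] [M.inv s, a, s] [M.inv s, b, s] w6
  have m4 := M.mem_assoc [] [M.inv s, a, s] [M.inv s, b, s] w6
  simp only [List.cons_append, List.nil_append, List.append_nil] at e4 m4
  have e5 := M.Pi_assoc [M.Pi [M.inv s, a, s]] [M.inv s, b, s] [] m4
  simp only [List.cons_append, List.nil_append, List.append_nil] at e5
  show M.Pi [M.inv s, M.Pi [a, b], s] = M.Pi [M.conj a s, M.conj b s]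
  calc M.Pi [M.inv s, M.Pi [a, b], s]
      = M.Pi [M.inv s, a, s, M.inv s, b, s] := by rw [e1, e2, e3]
    _ = M.Pi [M.Pi [M.inv s, a, s], M.Pi [M.inv s, b, s]] := by rw [e4, e5]
    _ = M.Pi [M.conj a s, M.conj b s] := rfl

lemma setConj_subgroup_S (hobj : M.Objective Δ) (hS : S ∈ Δ)
    (hsub : ∀ X ∈ Δ, X ⊆ S) {X : Set L} {s : L} (hX : X ∈ Δ) (hs : s ∈ S) :
    M.IsSubgroup (M.setConj X s) := by
  have hXS : X ⊆ S := hsub X hX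
  have hXsub : M.IsSubgroup X := hobj.1 X hX
  have hsubS : M.setConj X s ⊆ S := setConj_sub_S hobj hS hXS hs
  constructor
  · refine ⟨⟨M.conj (M.one) s, M.one, ?_, rfl⟩, ?_, ?_⟩
    · exact hXsub.1.2.2 [] (by intro a ha; exact absurd ha (List.not_mem_nil)) M.nil_mem
    · rintro y ⟨x, hx, rfl⟩
      rw [← M.conj_inv (setConjDef_S hobj hS hXS hs x hx)]
      exact ⟨M.inv x, hXsub.1.2.1 x hx, rfl⟩
    · intro w hw hwD
      clear hwD
      induction w with
      | nil =>
        refine ⟨M.one, ?_, ?_⟩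
        · exact hXsub.1.2.2 [] (by intro a ha; exact absurd ha (List.not_mem_nil)) M.nil_mem
        · exact (M.conj_one s).symm
      | cons ξ w' ih =>
        have hξ : ξ ∈ M.setConj X s := hw ξ (List.mem_cons_self)
        have hw' : ∀ a ∈ w', a ∈ M.setConj X s := fun a ha => hw a (List.mem_cons_of_mem _ ha)
        have hPw' : M.Pi w' ∈ M.setConj X s := ih hw'
        have hconsD : (ξ :: w') ∈ M.D :=
          word_S hobj hS (fun a ha => hsubS (hw a ha))
        have hconsD' : [ξ] ++ w' ++ [] ∈ M.D := by simpa using hconsD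
        have e := M.Pi_assoc [ξ] w' [] hconsD'
        have e0 : M.Pi (ξ :: w') = M.Pi [ξ, M.Pi w'] := by
          have l1 : ([ξ] ++ w' ++ [] : List L) = ξ :: w' := by simp
          have l2 : ([ξ] ++ [M.Pi w'] ++ [] : List L) = [ξ, M.Pi w'] := by simp
          rw [l1, l2] at e
          exact e
        rw [e0]
        obtain ⟨x, hx, rfl⟩ := hξ
        obtain ⟨x', hx', hx'e⟩ := hPw'
        rw [hx'e]
        rw [← conj_mul_S hobj hS (hXS hx) (hXS hx') hs]
        refine ⟨M.Pi [x, x'], ?_, rfl⟩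
        apply hXsub.1.2.2
        · intro a ha
          rcases List.mem_cons.mp ha with rfl | ha; · exact hx
          rcases List.mem_cons.mp ha with rfl | ha; · exact hx'
          · exact absurd ha (List.not_mem_nil)
        · apply word_S hobj hS
          intro a ha
          rcases List.mem_cons.mp ha with rfl | ha; · exact hXS hx
          rcases List.mem_cons.mp ha with rfl | ha; · exact hXS hx'
          · exact absurd ha (List.not_mem_nil)
  · intro w hw
    exact word_S hobj hS (fun a ha => hsubS (hw a ha))

lemma setConj_mem_delta (hobj : M.Objective Δ) (hS : S ∈ Δ)
    (hsub : ∀ X ∈ Δ, X ⊆ S) {X : Set L} {s : L} (hX : X ∈ Δ) (hs : s ∈ S) :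
    M.setConj X s ∈ Δ := by
  have hXS : X ⊆ S := hsub X hX
  have h := hobj.2.2 X hX S hS s (setConjDef_S hobj hS hXS hs)
    (setConj_subgroup_S hobj hS hsub hX hs) (setConj_sub_S hobj hS hXS hs)
  exact h (M.setConj X s) (setConj_subgroup_S hobj hS hsub hX hs)
    (fun a ha => ha) (setConj_sub_S hobj hS hXS hs)

lemma mem_of_chain (hobj : M.Objective Δ) {w : List L} {X : Set L}
    (h : M.viaChain Δ w X) : w ∈ M.D := by
  rw [hobj.2.1]
  exact ⟨X, h⟩

lemma chain_of_mem (hobj : M.Objective Δ) {w : List L} (h : w ∈ M.D) :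
    ∃ X : Set L, M.viaChain Δ w X := by
  rw [hobj.2.1] at h
  exact h

end PartialGroupOn

namespace PartialGroupOn

variable {L : Type u} {M : PartialGroupOn L} {Δ : Set (Set L)} {S : Set L}

lemma viaChain_cons {X : Set L} {a : L} {w : List L} :
    M.viaChain Δ (a :: w) X ↔
      X ∈ Δ ∧ M.setConjDef X a ∧ M.viaChain Δ w (M.setConj X a) := Iff.rfl

lemma viaChain_nil {X : Set L} : M.viaChain Δ [] X ↔ X ∈ Δ := Iff.rfl

lemma exists_good (hobj : M.Objective Δ) (g : L) :
    ∃ V ∈ Δ, M.setConjDef V g ∧ M.setConj V g ∈ Δ := by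
  obtain ⟨X, hX⟩ := chain_of_mem hobj (M.mem_single g)
  rw [M.viaChain_cons] at hX
  exact ⟨X, hX.1, hX.2.1, hX.2.2⟩

lemma mem_Sg {g x : L} :
    x ∈ M.Sg S g ↔ x ∈ S ∧ [M.inv g, x, g] ∈ M.D ∧ M.conj x g ∈ S := Iff.rfl

lemma good_sub_Sg (hsub : ∀ X ∈ Δ, X ⊆ S) {V : Set L} {g : L} (hV : V ∈ Δ)
    (hVd : M.setConjDef V g) (hVg : M.setConj V g ∈ Δ) : V ⊆ M.Sg S g := by
  intro ξ hξ
  exact ⟨hsub V hV hξ, hVd ξ hξ, hsub _ hVg ⟨ξ, hξ, rfl⟩⟩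

/-- From `x ∈ S_g`, a good pair `(V, V^x)`. -/
lemma CxPair (hobj : M.Objective Δ) {g x : L} (hx : [M.inv g, x, g] ∈ M.D) :
    ∃ V ∈ Δ, (M.setConjDef V g ∧ M.setConj V g ∈ Δ) ∧
      (M.setConj V x ∈ Δ ∧ M.setConjDef (M.setConj V x) g ∧
        M.setConj (M.setConj V x) g ∈ Δ) := by
  obtain ⟨X0, hc⟩ := chain_of_mem hobj hx
  rw [M.viaChain_cons] at hc
  obtain ⟨hX0, hd0, hc⟩ := hc
  rw [M.viaChain_cons] at hc
  obtain ⟨hX1, hd1, hc⟩ := hc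
  rw [M.viaChain_cons] at hc
  obtain ⟨hX2, hd2, hc⟩ := hc
  rw [M.viaChain_nil] at hc
  refine ⟨M.setConj X0 (M.inv g), hX1, ⟨?_, ?_⟩, hX2, hd2, hc⟩
  · rintro ζ ⟨x0, hx0, rfl⟩
    have h := M.rev_conj_mem (hd0 x0 hx0)
    rwa [M.inv_inv] at h
  · have e := setConj_inv_setConj (M := M) hd0
    rw [M.inv_inv] at e
    rw [e]
    exact hX0

/-- pointwise transport: if `V` is a good object for `g` and `y ∈ S_g`, then
for `ξ ∈ V` the conjugate `ξ^y` has defined `g`-conjugation with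
`(ξ^y)^g = (ξ^g)^{y^g}`. -/
lemma transport_point (hobj : M.Objective Δ) (hS : S ∈ Δ)
    (hsub : ∀ X ∈ Δ, X ⊆ S) {V : Set L} {g y ξ : L} (hV : V ∈ Δ)
    (hVd : M.setConjDef V g) (hVg : M.setConj V g ∈ Δ)
    (hy : y ∈ M.Sg S g) (hξ : ξ ∈ V) :
    [M.inv g, M.conj ξ y, g] ∈ M.D ∧
      M.conj (M.conj ξ y) g = M.conj (M.conj ξ g) (M.conj y g) := by
  have hyS : y ∈ S := hy.1
  have hyg : [M.inv g, y, g] ∈ M.D := hy.2.1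
  have hbS : M.conj y g ∈ S := hy.2.2
  set b := M.conj y g with hbdef
  have hVS : V ⊆ S := hsub V hV
  set W := M.setConj V g with hWdef
  have hWS : W ⊆ S := hsub W hVg
  set Wb := M.setConj W b with hWbdef
  have hWbΔ : Wb ∈ Δ := setConj_mem_delta hobj hS hsub hVg hbS
  have hWbS : Wb ⊆ S := hsub Wb hWbΔ
  have hWbsub : M.IsSubgroup Wb := setConj_subgroup_S hobj hS hsub hVg hbS
  have hξg : [M.inv g, ξ, g] ∈ M.D := hVd ξ hξ
  set η := M.conj ξ g with hηdef
  have hηW : η ∈ W := ⟨ξ, hξ, rfl⟩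
  have hηS : η ∈ S := hWS hηW
  have hθw : [M.inv b, η, b] ∈ M.D := by
    apply word_S hobj hS
    intro a ha
    rcases List.mem_cons.mp ha with rfl | ha; · exact inv_S hobj hS hbS
    rcases List.mem_cons.mp ha with rfl | ha; · exact hηS
    rcases List.mem_cons.mp ha with rfl | ha; · exact hbS
    · exact absurd ha (List.not_mem_nil)
  set θ := M.conj η b with hθdef
  have hθWb : θ ∈ Wb := ⟨η, hηW, rfl⟩
  have hθS : θ ∈ S := hWbS hθWb
  -- the seven-letter word
  have hVyΔ : M.setConj V y ∈ Δ := setConj_mem_delta hobj hS hsub hV hyS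
  have hW7 : [M.inv y, g, b, θ, M.inv b, M.inv g, y] ∈ M.D := by
    apply mem_of_chain hobj (X := M.setConj V y)
    rw [M.viaChain_cons]
    refine ⟨hVyΔ, setConjDef_S hobj hS (setConj_sub_S hobj hS hVS hyS)
      (inv_S hobj hS hyS), ?_⟩
    rw [setConj_inv_setConj (M := M) (setConjDef_S hobj hS hVS hyS)]
    rw [M.viaChain_cons]
    refine ⟨hV, hVd, ?_⟩
    rw [M.viaChain_cons]
    refine ⟨hVg, setConjDef_S hobj hS hWS hbS, ?_⟩
    rw [M.viaChain_cons]
    refine ⟨hWbΔ, setConjDef_S hobj hS hWbS hθS, ?_⟩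
    rw [setConj_self (M := M) hWbsub hθWb]
    rw [M.viaChain_cons]
    refine ⟨hWbΔ, setConjDef_S hobj hS hWbS (inv_S hobj hS hbS), ?_⟩
    rw [setConj_inv_setConj (M := M) (setConjDef_S hobj hS hWS hbS)]
    rw [M.viaChain_cons]
    refine ⟨hVg, setConjDef_inv (M := M) hVd, ?_⟩
    rw [setConj_inv_setConj (M := M) hVd]
    rw [M.viaChain_cons]
    refine ⟨hV, setConjDef_S hobj hS hVS hyS, ?_⟩
    rw [M.viaChain_nil]
    exact hVyΔ
  -- (a) collapse the middle block (b, θ, b⁻¹) to η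
  have hbθ_val : M.Pi [b, θ, M.inv b] = η := M.pi_rev_conj hθw
  have hA := M.mem_assoc [M.inv y, g] [b, θ, M.inv b] [M.inv g, y] hW7
  have eA := M.Pi_assoc [M.inv y, g] [b, θ, M.inv b] [M.inv g, y] hW7
  simp only [List.cons_append, List.nil_append, List.append_nil] at hA eA
  rw [hbθ_val] at hA eA
  -- (b) collapse (g, η, g⁻¹) to ξ
  have hgη_val : M.Pi [g, η, M.inv g] = ξ := M.pi_rev_conj hξg
  have hB := M.mem_assoc [M.inv y] [g, η, M.inv g] [y] hA
  have eB := M.Pi_assoc [M.inv y] [g, η, M.inv g] [y] hA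
  simp only [List.cons_append, List.nil_append, List.append_nil] at hB eB
  rw [hgη_val] at hB eB
  -- (c) collapse the first three letters to g
  have m_c : [M.inv y, g, b] ∈ M.D :=
    M.mem_append_left [M.inv y, g, b] [θ, M.inv b, M.inv g, y] hW7
  have e_c := M.Pi_assoc [M.inv y] [g, b] [] m_c
  simp only [List.cons_append, List.nil_append, List.append_nil] at e_c
  have hcomm : M.Pi [y, g] = M.Pi [g, b] := M.pi_comm hyg
  rw [← hcomm] at e_c
  have hygpair : [y, g] ∈ M.D := M.comm_pair_mem hyg
  have m3 : [M.inv y, y, g] ∈ M.D := by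
    have h1 : [M.inv g, M.inv y, y, g] ∈ M.D := M.mem_inv _ hygpair
    exact M.mem_append_right [M.inv g] _ h1
  have e2 := M.Pi_assoc [M.inv y] [y, g] [] m3
  have e3 := M.Pi_assoc [] [M.inv y, y] [g] m3
  simp only [List.cons_append, List.nil_append, List.append_nil] at e2 e3
  rw [M.pi_inv_pair y] at e3
  have hc1 : M.Pi [M.inv y, g, b] = g := by
    rw [e_c, ← e2, e3, M.pi_one_mul g]
  have hC := M.mem_assoc [] [M.inv y, g, b] [θ, M.inv b, M.inv g, y] hW7
  have eC := M.Pi_assoc [] [M.inv y, g, b] [θ, M.inv b, M.inv g, y] hW7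
  simp only [List.cons_append, List.nil_append, List.append_nil] at hC eC
  rw [hc1] at hC eC
  -- (d) collapse the last three letters to g⁻¹
  have hwi : M.Pi [M.inv b, M.inv g, M.inv (M.inv y)] =
      M.inv (M.Pi [M.inv y, g, b]) := M.pi_wordInv m_c
  rw [M.inv_inv, hc1] at hwi
  have hD := M.mem_assoc [g, θ] [M.inv b, M.inv g, y] [] hC
  have eD := M.Pi_assoc [g, θ] [M.inv b, M.inv g, y] [] hC
  simp only [List.cons_append, List.nil_append, List.append_nil] at hD eD
  rw [hwi] at hD eD
  -- assemble the value equation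
  have keyval : M.conj ξ y = M.Pi [g, θ, M.inv g] := by
    show M.Pi [M.inv y, ξ, y] = M.Pi [g, θ, M.inv g]
    rw [← eB, ← eA, eC, eD]
  -- the crossing for ξ^y
  have hgθ' : [M.inv (M.inv g), θ, M.inv g] ∈ M.D := by
    rw [M.inv_inv]; exact hD
  have r1 := M.rev_conj_mem hgθ'
  rw [M.inv_inv] at r1
  have r2 := M.pi_rev_conj hgθ'
  rw [M.inv_inv] at r2
  have idval : M.conj θ (M.inv g) = M.conj ξ y := by
    show M.Pi [M.inv (M.inv g), θ, M.inv g] = M.conj ξ y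
    rw [M.inv_inv, ← keyval]
  rw [idval] at r1 r2
  exact ⟨r1, r2⟩

/-- transport of good objects by elements of `S_g`. -/
lemma transport (hobj : M.Objective Δ) (hS : S ∈ Δ)
    (hsub : ∀ X ∈ Δ, X ⊆ S) {V : Set L} {g y : L} (hV : V ∈ Δ)
    (hVd : M.setConjDef V g) (hVg : M.setConj V g ∈ Δ)
    (hy : y ∈ M.Sg S g) :
    M.setConj V y ∈ Δ ∧ M.setConjDef (M.setConj V y) g ∧
      M.setConj (M.setConj V y) g ∈ Δ := by
  have hyS : y ∈ S := hy.1
  have hbS : M.conj y g ∈ S := hy.2.2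
  refine ⟨setConj_mem_delta hobj hS hsub hV hyS, ?_, ?_⟩
  · rintro ζ ⟨ξ, hξ, rfl⟩
    exact (transport_point hobj hS hsub hV hVd hVg hy hξ).1
  · have E : M.setConj (M.setConj V y) g =
        M.setConj (M.setConj V g) (M.conj y g) := by
      ext z
      constructor
      · rintro ⟨ζ, ⟨ξ, hξ, rfl⟩, rfl⟩
        rw [(transport_point hobj hS hsub hV hVd hVg hy hξ).2]
        exact ⟨M.conj ξ g, ⟨ξ, hξ, rfl⟩, rfl⟩
      · rintro ⟨ζ, ⟨ξ, hξ, rfl⟩, rfl⟩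
        exact ⟨M.conj ξ y, ⟨ξ, hξ, rfl⟩,
          ((transport_point hobj hS hsub hV hVd hVg hy hξ).2).symm⟩
    rw [E]
    exact setConj_mem_delta hobj hS hsub hVg hbS

end PartialGroupOn

namespace PartialGroupOn

variable {L : Type u} {M : PartialGroupOn L} {Δ : Set (Set L)} {S : Set L}

lemma Sg_word4 (hobj : M.Objective Δ) (hS : S ∈ Δ) (hsub : ∀ X ∈ Δ, X ⊆ S)
    {g x y : L} (hx : x ∈ M.Sg S g) (hy : y ∈ M.Sg S g) :
    [M.inv g, x, y, g] ∈ M.D := by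
  obtain ⟨V, hV, ⟨hVd, hVg⟩, hVxΔ, hVxd, hVxg⟩ := CxPair hobj hx.2.1
  have hVS : V ⊆ S := hsub V hV
  have t := transport hobj hS hsub hVxΔ hVxd hVxg hy
  apply mem_of_chain hobj (X := M.setConj V g)
  rw [M.viaChain_cons]
  refine ⟨hVg, setConjDef_inv (M := M) hVd, ?_⟩
  rw [setConj_inv_setConj (M := M) hVd]
  rw [M.viaChain_cons]
  refine ⟨hV, setConjDef_S hobj hS hVS hx.1, ?_⟩
  rw [M.viaChain_cons]
  refine ⟨hVxΔ, setConjDef_S hobj hS (hsub _ hVxΔ) hy.1, ?_⟩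
  rw [M.viaChain_cons]
  refine ⟨t.1, t.2.1, ?_⟩
  rw [M.viaChain_nil]
  exact t.2.2

lemma Sg_mul (hobj : M.Objective Δ) (hS : S ∈ Δ) (hsub : ∀ X ∈ Δ, X ⊆ S)
    {g x y : L} (hx : x ∈ M.Sg S g) (hy : y ∈ M.Sg S g) :
    M.Pi [x, y] ∈ M.Sg S g ∧
      M.conj (M.Pi [x, y]) g = M.Pi [M.conj x g, M.conj y g] := by
  obtain ⟨V, hV, ⟨hVd, hVg⟩, hVxΔ, hVxd, hVxg⟩ := CxPair hobj hx.2.1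
  have hVS : V ⊆ S := hsub V hV
  have hbS : M.conj y g ∈ S := hy.2.2
  have h4 : [M.inv g, x, y, g] ∈ M.D := Sg_word4 hobj hS hsub hx hy
  -- the auxiliary word (g⁻¹, x, g, y^g)
  have h4' : [M.inv g, x, g, M.conj y g] ∈ M.D := by
    apply mem_of_chain hobj (X := M.setConj V g)
    rw [M.viaChain_cons]
    refine ⟨hVg, setConjDef_inv (M := M) hVd, ?_⟩
    rw [setConj_inv_setConj (M := M) hVd]
    rw [M.viaChain_cons]
    refine ⟨hV, setConjDef_S hobj hS hVS hx.1, ?_⟩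
    rw [M.viaChain_cons]
    refine ⟨hVxΔ, hVxd, ?_⟩
    rw [M.viaChain_cons]
    refine ⟨hVxg, setConjDef_S hobj hS (hsub _ hVxg) hbS, ?_⟩
    rw [M.viaChain_nil]
    exact setConj_mem_delta hobj hS hsub hVxg hbS
  -- value computation
  have eP := M.Pi_assoc [M.inv g, x] [y, g] [] h4
  have eQ := M.Pi_assoc [M.inv g, x] [g, M.conj y g] [] h4'
  have eR := M.Pi_assoc [] [M.inv g, x, g] [M.conj y g] h4'
  have eM := M.Pi_assoc [M.inv g] [x, y] [g] h4
  have mR := M.mem_assoc [] [M.inv g, x, g] [M.conj y g] h4'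
  simp only [List.cons_append, List.nil_append, List.append_nil] at eP eQ eR eM mR
  have hcomm : M.Pi [y, g] = M.Pi [g, M.conj y g] := M.pi_comm hy.2.1
  have hval : M.conj (M.Pi [x, y]) g = M.Pi [M.conj x g, M.conj y g] := by
    show M.Pi [M.inv g, M.Pi [x, y], g] = _
    rw [← eM, eP, hcomm, ← eQ, eR]
    rfl
  refine ⟨⟨?_, ?_, ?_⟩, hval⟩
  · apply pi_S hobj hS
    intro a ha
    rcases List.mem_cons.mp ha with rfl | ha; · exact hx.1
    rcases List.mem_cons.mp ha with rfl | ha; · exact hy.1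
    · exact absurd ha (List.not_mem_nil)
  · exact M.mem_assoc [M.inv g] [x, y] [g] h4
  · rw [hval]
    apply pi_S hobj hS
    intro a ha
    rcases List.mem_cons.mp ha with rfl | ha; · exact hx.2.2
    rcases List.mem_cons.mp ha with rfl | ha; · exact hy.2.2
    · exact absurd ha (List.not_mem_nil)

lemma one_mem_Sg (hobj : M.Objective Δ) (hS : S ∈ Δ) {g : L} :
    M.one ∈ M.Sg S g := by
  refine ⟨one_S hobj hS, M.conj_one_mem g, ?_⟩
  rw [M.conj_one g]
  exact one_S hobj hS

lemma inv_mem_Sg (hobj : M.Objective Δ) (hS : S ∈ Δ) {g x : L}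
    (hx : x ∈ M.Sg S g) : M.inv x ∈ M.Sg S g := by
  refine ⟨inv_S hobj hS hx.1, M.conj_inv_mem hx.2.1, ?_⟩
  rw [M.conj_inv hx.2.1]
  exact inv_S hobj hS hx.2.2

lemma Sg_subgroup (hobj : M.Objective Δ) (hS : S ∈ Δ)
    (hsub : ∀ X ∈ Δ, X ⊆ S) (g : L) : M.IsSubgroup (M.Sg S g) := by
  have hSgS : M.Sg S g ⊆ S := fun x hx => hx.1
  constructor
  · refine ⟨⟨M.one, one_mem_Sg hobj hS⟩, fun x hx => inv_mem_Sg hobj hS hx, ?_⟩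
    intro w hw hwD
    clear hwD
    induction w with
    | nil => exact one_mem_Sg hobj hS
    | cons ξ w' ih =>
      have hξ : ξ ∈ M.Sg S g := hw ξ (List.mem_cons_self)
      have hw' : ∀ a ∈ w', a ∈ M.Sg S g := fun a ha => hw a (List.mem_cons_of_mem _ ha)
      have hPw' : M.Pi w' ∈ M.Sg S g := ih hw'
      have hconsD : (ξ :: w') ∈ M.D := word_S hobj hS (fun a ha => hSgS (hw a ha))
      have hconsD' : [ξ] ++ w' ++ [] ∈ M.D := by simpa using hconsD
      have e := M.Pi_assoc [ξ] w' [] hconsD'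
      have e0 : M.Pi (ξ :: w') = M.Pi [ξ, M.Pi w'] := by
        have l1 : ([ξ] ++ w' ++ [] : List L) = ξ :: w' := by simp
        have l2 : ([ξ] ++ [M.Pi w'] ++ [] : List L) = [ξ, M.Pi w'] := by simp
        rw [l1, l2] at e
        exact e
      rw [e0]
      exact (Sg_mul hobj hS hsub hξ hPw').1
  · intro w hw
    exact word_S hobj hS (fun a ha => hSgS (hw a ha))

end PartialGroupOn

open PartialGroupOn

theorem Sg_mem_and_conj (M : PartialGroupOn L) (Δ : Set (Set L)) (S : Set L)
    (hobj : M.Objective Δ) (hS : S ∈ Δ) (hsub : ∀ X ∈ Δ, X ⊆ S) (g : L) :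
    M.Sg S g ∈ Δ ∧
    (∀ a ∈ M.Sg S g, ∀ b ∈ M.Sg S g,
      [a, b] ∈ M.D ∧ [M.conj a g, M.conj b g] ∈ M.D ∧
        M.conj (M.Pi [a, b]) g = M.Pi [M.conj a g, M.conj b g]) ∧
    (∀ a ∈ M.Sg S g, ∀ b ∈ M.Sg S g, M.conj a g = M.conj b g → a = b) ∧
    M.setConj (M.Sg S g) g = M.Sg S (M.inv g) ∧
    (∀ P : Set L, M.IsSubgroup P → P ⊆ M.Sg S g →
      M.IsSubgroup (M.setConj P g) ∧ M.setConj P g ⊆ S) := by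
  refine ⟨?_, ?_, ?_, ?_, ?_⟩
  · -- S_g ∈ Δ
    obtain ⟨V, hV, hVd, hVg⟩ := exists_good hobj g
    exact up_closed hobj hS hV (Sg_subgroup hobj hS hsub g)
      (good_sub_Sg hsub hV hVd hVg) (fun x hx => hx.1)
  · -- multiplicativity
    intro a ha b hb
    refine ⟨?_, ?_, (Sg_mul hobj hS hsub ha hb).2⟩
    · apply word_S hobj hS
      intro c hc
      rcases List.mem_cons.mp hc with rfl | hc; · exact ha.1
      rcases List.mem_cons.mp hc with rfl | hc; · exact hb.1
      · exact absurd hc (List.not_mem_nil)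
    · apply word_S hobj hS
      intro c hc
      rcases List.mem_cons.mp hc with rfl | hc; · exact ha.2.2
      rcases List.mem_cons.mp hc with rfl | hc; · exact hb.2.2
      · exact absurd hc (List.not_mem_nil)
  · -- injectivity
    intro a ha b hb h
    have e1 := M.conj_conj_inv ha.2.1
    have e2 := M.conj_conj_inv hb.2.1
    rw [← e1, ← e2, h]
  · -- (S_g)^g = S_{g⁻¹}
    ext z
    constructor
    · rintro ⟨x, hx, rfl⟩
      refine ⟨hx.2.2, M.rev_conj_mem' hx.2.1, ?_⟩
      rw [M.conj_conj_inv hx.2.1]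
      exact hx.1
    · intro hz
      obtain ⟨hzS, hzw, hzim⟩ := hz
      have hcross := M.rev_conj_mem' hzw
      simp only [M.inv_inv] at hcross
      have hval := M.conj_conj_inv hzw
      simp only [M.inv_inv] at hval
      refine ⟨M.conj z (M.inv g), ⟨hzim, hcross, ?_⟩, hval.symm⟩
      rw [hval]
      exact hzS
  · -- conjugates of subgroups of S_g
    intro P hP hPSg
    have h1P : M.one ∈ P :=
      hP.1.2.2 [] (fun a ha => absurd ha (List.not_mem_nil)) M.nil_mem
    have hPgS : M.setConj P g ⊆ S := by
      rintro z ⟨x, hx, rfl⟩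
      exact (hPSg hx).2.2
    refine ⟨⟨⟨⟨M.conj M.one g, M.one, h1P, rfl⟩, ?_, ?_⟩, ?_⟩, hPgS⟩
    · rintro z ⟨x, hx, rfl⟩
      rw [← M.conj_inv (hPSg hx).2.1]
      exact ⟨M.inv x, hP.1.2.1 x hx, rfl⟩
    · intro w hw hwD
      clear hwD
      induction w with
      | nil => exact ⟨M.one, h1P, (M.conj_one g).symm⟩
      | cons ξ w' ih =>
        have hξ : ξ ∈ M.setConj P g := hw ξ (List.mem_cons_self)
        have hw' : ∀ a ∈ w', a ∈ M.setConj P g :=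
          fun a ha => hw a (List.mem_cons_of_mem _ ha)
        have hPw' : M.Pi w' ∈ M.setConj P g := ih hw'
        have hconsD : (ξ :: w') ∈ M.D :=
          word_S hobj hS (fun a ha => hPgS (hw a ha))
        have hconsD' : [ξ] ++ w' ++ [] ∈ M.D := by simpa using hconsD
        have e := M.Pi_assoc [ξ] w' [] hconsD'
        have e0 : M.Pi (ξ :: w') = M.Pi [ξ, M.Pi w'] := by
          have l1 : ([ξ] ++ w' ++ [] : List L) = ξ :: w' := by simp
          have l2 : ([ξ] ++ [M.Pi w'] ++ [] : List L) = [ξ, M.Pi w'] := by simp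
          rw [l1, l2] at e
          exact e
        rw [e0]
        obtain ⟨x, hx, rfl⟩ := hξ
        obtain ⟨x', hx', e'⟩ := hPw'
        rw [e', ← (Sg_mul hobj hS hsub (hPSg hx) (hPSg hx')).2]
        refine ⟨M.Pi [x, x'], ?_, rfl⟩
        apply hP.1.2.2
        · intro a ha
          rcases List.mem_cons.mp ha with rfl | ha; · exact hx
          rcases List.mem_cons.mp ha with rfl | ha; · exact hx'
          · exact absurd ha (List.not_mem_nil)
        · apply hP.2
          intro a ha
          rcases List.mem_cons.mp ha with rfl | ha; · exact hx
          rcases List.mem_cons.mp ha with rfl | ha; · exact hx'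
          · exact absurd ha (List.not_mem_nil)
    · intro w hw
      exact word_S hobj hS (fun a ha => hPgS (hw a ha))
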